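/- Let A be a two-dimensional non-degenerate evolution algebra over an algebraically closed field F whose standard decomposition consists of two one-dimensional subspaces with A_1 ≅ A_2 ≅ O_1 (i.e. A has a natural basis {e_1, e_2} with e_1² = a_{21}e_2, e_2² = a_{12}e_1 where a_{12}a_{21} ≠ 0, and no diagonal components). Then A is isomorphic to the algebra with e_1² = e_2, e_2² = e_1, e_1e_2 = 0. -/

import Mathlib

/-- The two-dimensional evolution algebra with structure matrix `[[0, a₁₂],[a₂₁, 0]]`:
`e₁² = a₂₁·e₂`, `e₂² = a₁₂·e₁`, `e₁e₂ = 0`. -/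
def evMul2 {F : Type*} [Field F] (a12 a21 : F) (x y : Fin 2 → F) : Fin 2 → F :=
  ![a12 * (x 1 * y 1), a21 * (x 0 * y 0)]

/-- **Classification in the case `Δ(A) = (O₁, O₁)`.** Over an algebraically closed
field, a two-dimensional non-degenerate evolution algebra with structure matrix
`[[0, a₁₂],[a₂₁, 0]]`, `a₁₂a₂₁ ≠ 0`, is isomorphic to the algebra
`e₁² = e₂`, `e₂² = e₁`, `e₁e₂ = 0`. -/
theorem stmt_17 (F : Type*) [Field F] [IsAlgClosed F] (a12 a21 : F)
    (h : a12 * a21 ≠ 0) :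
    ∃ φ : (Fin 2 → F) ≃ₗ[F] (Fin 2 → F),
      ∀ x y, φ (evMul2 a12 a21 x y) = evMul2 1 1 (φ x) (φ y) := by
  have ha12 : a12 ≠ 0 := fun h' => h (by simp [h'])
  have ha21 : a21 ≠ 0 := fun h' => h (by simp [h'])
  obtain ⟨c, hc⟩ := IsAlgClosed.exists_pow_nat_eq (k := F) (a12 * a21 ^ 2) (n := 3) (by norm_num)
  have hc0 : c ≠ 0 := by
    intro h0
    rw [h0] at hc
    exact ha12 (by
      have : a12 * a21 ^ 2 = 0 := by rw [← hc]; ring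
      rcases mul_eq_zero.mp this with h1 | h1
      · exact h1
      · exact absurd (pow_eq_zero_iff two_ne_zero |>.mp h1) ha21)
  set d := c ^ 2 / a21 with hd
  have hd0 : d ≠ 0 := div_ne_zero (pow_ne_zero _ hc0) ha21
  have h2 : d * a21 = c ^ 2 := by rw [hd, div_mul_cancel₀ _ ha21]
  have h1 : c * a12 = d ^ 2 := by
    rw [hd]
    field_simp
    linear_combination (-1 : F) * hc
  refine ⟨{ toFun := fun x => ![c * x 0, d * x 1],
            invFun := fun x => ![c⁻¹ * x 0, d⁻¹ * x 1],
            map_add' := by intro x y; funext i; fin_cases i <;> simp <;> ring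
            map_smul' := by intro m x; funext i; fin_cases i <;> simp <;> ring
            left_inv := by
              intro x; funext i; fin_cases i <;>
                simp [inv_mul_cancel_left₀, hc0, hd0]
            right_inv := by
              intro x; funext i; fin_cases i <;>
                simp [mul_inv_cancel_left₀, hc0, hd0] }, ?_⟩
  intro x y
  funext i
  fin_cases i <;> simp [evMul2]
  · linear_combination (x 1 * y 1) * h1
  · linear_combination (x 0 * y 0) * h2
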